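/- The two combinatorial sums for the Poisson pmf of order k agree: for n = rk + m with m ∈ {1,...,k}, r ≥ 1, writing n = ℓ(k+1) + m' with m' ∈ {0,...,k}, we have Σ_{j=1}^{n} C(n-1,j-1) λ^j/j! − Σ_{i=1}^{ℓ} (−1)^{i−1} (λ^i/i!) Σ_{j=0}^{n−i(k+1)} C(n−i(k+1)+i−1, j+i−1) λ^j/j! = Σ_{j=r+1}^{n} C(n-1,j-1) λ^j/j! − Σ_{i=1}^{r} (−1)^{i−1} (λ^i/i!) Σ_{j=r+1−i}^{n−ik−1} C(n−ik−1, j+i−1) λ^j/j!, as polynomial identities in λ. -/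

import Mathlib

open Finset

private lemma alt_sum_pow : ∀ d t : ℕ, d < t →
    ∑ i ∈ Finset.range (t + 1), (-1 : ℝ) ^ i * (t.choose i : ℝ) * (i : ℝ) ^ d = 0 := by
  intro d
  induction d using Nat.strong_induction_on with
  | _ d ih =>
    intro t hd
    match d, hd with
    | 0, hd =>
      have h0 : t ≠ 0 := by omega
      have h := Int.alternating_sum_range_choose_of_ne h0
      have h2 := congrArg (fun z : ℤ => (z : ℝ)) h
      push_cast at h2
      simpa using h2
    | d + 1, hd =>
      obtain ⟨s, rfl⟩ : ∃ s, t = s + 1 := ⟨t - 1, by omega⟩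
      have hds : d < s := by omega
      rw [Finset.sum_range_succ']
      have key : ∀ i ∈ Finset.range (s + 1),
          (-1 : ℝ) ^ (i+1) * ((s+1).choose (i+1) : ℝ) * ((i+1 : ℕ) : ℝ) ^ (d+1)
          = ∑ e ∈ Finset.range (d+1),
              (-((s:ℝ)+1) * (d.choose e : ℝ)) * ((-1:ℝ)^i * (s.choose i : ℝ) * (i:ℝ)^e) := by
        intro i _
        have hc : (((s+1).choose (i+1) : ℕ) : ℝ) * ((i:ℝ)+1) = ((s:ℝ)+1) * (s.choose i : ℝ) := by
          have h3 := Nat.add_one_mul_choose_eq s i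
          have h4 := congrArg (fun z : ℕ => (z : ℝ)) h3
          push_cast at h4
          linarith
        have hb : ((i:ℝ)+1)^d = ∑ e ∈ Finset.range (d+1), (i:ℝ)^e * (d.choose e : ℝ) := by
          have h5 := add_pow (i:ℝ) 1 d
          simpa using h5
        push_cast
        calc (-1 : ℝ) ^ (i+1) * ((s+1).choose (i+1) : ℝ) * ((i:ℝ)+1) ^ (d+1)
            = (-(-1:ℝ)^i) * ((((s+1).choose (i+1) : ℕ):ℝ) * ((i:ℝ)+1)) * ((i:ℝ)+1)^d := by
              rw [pow_succ (((i:ℝ)+1)) d, pow_succ]; push_cast; ring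
          _ = (-(-1:ℝ)^i) * (((s:ℝ)+1) * (s.choose i : ℝ)) *
                (∑ e ∈ Finset.range (d+1), (i:ℝ)^e * (d.choose e : ℝ)) := by rw [hc, hb]
          _ = ∑ e ∈ Finset.range (d+1),
              (-((s:ℝ)+1) * (d.choose e : ℝ)) * ((-1:ℝ)^i * (s.choose i : ℝ) * (i:ℝ)^e) := by
              rw [Finset.mul_sum]; apply Finset.sum_congr rfl; intro e _; ring
      rw [Finset.sum_congr rfl key, Finset.sum_comm]
      have z : ∀ e ∈ Finset.range (d+1),
          ∑ i ∈ Finset.range (s+1),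
            (-((s:ℝ)+1) * (d.choose e : ℝ)) * ((-1:ℝ)^i * (s.choose i : ℝ) * (i:ℝ)^e) = 0 := by
        intro e he
        have he' := Finset.mem_range.mp he
        rw [← Finset.mul_sum, ih e (by omega) s (by omega), mul_zero]
      rw [Finset.sum_congr rfl z]
      simp

private lemma alt_sum_poly (t : ℕ) (p : Polynomial ℝ) (hp : p.natDegree < t) :
    ∑ i ∈ Finset.range (t + 1), (-1 : ℝ) ^ i * (t.choose i : ℝ) * p.eval (i : ℝ) = 0 := by
  have hev : ∀ i : ℕ, p.eval (i : ℝ) = ∑ e ∈ Finset.range t, p.coeff e * (i : ℝ) ^ e :=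
    fun i => Polynomial.eval_eq_sum_range' hp _
  calc ∑ i ∈ Finset.range (t + 1), (-1 : ℝ) ^ i * (t.choose i : ℝ) * p.eval (i : ℝ)
      = ∑ i ∈ Finset.range (t + 1), ∑ e ∈ Finset.range t,
          p.coeff e * ((-1 : ℝ) ^ i * (t.choose i : ℝ) * (i : ℝ) ^ e) := by
        apply Finset.sum_congr rfl; intro i _
        rw [hev i, Finset.mul_sum]
        apply Finset.sum_congr rfl; intro e _; ring
    _ = ∑ e ∈ Finset.range t, p.coeff e *
          (∑ i ∈ Finset.range (t + 1), (-1 : ℝ) ^ i * (t.choose i : ℝ) * (i : ℝ) ^ e) := by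
        rw [Finset.sum_comm]
        apply Finset.sum_congr rfl; intro e _
        rw [Finset.mul_sum]
    _ = 0 := by
        apply Finset.sum_eq_zero; intro e he
        rw [alt_sum_pow e t (Finset.mem_range.mp he), mul_zero]

private lemma cast_choose_prod (a b : ℕ) :
    (a.choose b : ℝ) * (Nat.factorial b : ℝ) = ∏ j ∈ Finset.range b, ((a : ℝ) - (j : ℝ)) := by
  have hd : (a.descFactorial b : ℝ) = ∏ j ∈ Finset.range b, ((a : ℝ) - (j : ℝ)) := by
    rcases le_or_gt b a with h | h
    · rw [Nat.descFactorial_eq_prod_range]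
      push_cast
      apply Finset.prod_congr rfl; intro j hj
      rw [Nat.cast_sub (le_of_lt (lt_of_lt_of_le (Finset.mem_range.mp hj) h))]
    · rw [Nat.descFactorial_eq_zero_iff_lt.mpr h]
      rw [Nat.cast_zero, eq_comm]
      apply Finset.prod_eq_zero (Finset.mem_range.mpr h)
      simp
  rw [← hd, Nat.descFactorial_eq_factorial_mul_choose]
  push_cast; ring

private lemma key_alt (t a k : ℕ) (ht : 1 ≤ t) (hak : t * k ≤ a) :
    ∑ i ∈ Finset.range (t + 1), (-1 : ℝ) ^ i * (t.choose i : ℝ) *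
      ((a - i * k).choose (t - 1) : ℝ) = 0 := by
  set p : Polynomial ℝ :=
    (∏ j ∈ Finset.range (t - 1), (Polynomial.C ((a : ℝ) - (j : ℝ)) -
        Polynomial.C (k : ℝ) * Polynomial.X)) * Polynomial.C ((Nat.factorial (t - 1) : ℝ)⁻¹)
    with hp
  have hdeg : p.natDegree < t := by
    have h1 : p.natDegree ≤ t - 1 := by
      refine le_trans (Polynomial.natDegree_mul_le) ?_
      rw [Polynomial.natDegree_C, add_zero]
      refine le_trans (Polynomial.natDegree_prod_le _ _) ?_
      refine le_trans (Finset.sum_le_card_nsmul _ _ 1 ?_) (by simp)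
      intro j _
      refine le_trans (Polynomial.natDegree_sub_le _ _) ?_
      simp only [Polynomial.natDegree_C, max_le_iff]
      constructor
      · omega
      · refine le_trans (Polynomial.natDegree_mul_le) ?_
        simp [Polynomial.natDegree_X_le]
    omega
  have hev : ∀ i ∈ Finset.range (t + 1),
      ((a - i * k).choose (t - 1) : ℝ) = p.eval (i : ℝ) := by
    intro i hi
    have hik : i * k ≤ a := le_trans (Nat.mul_le_mul_right k (by
      have := Finset.mem_range.mp hi; omega)) hak
    have hcast : (((a - i * k : ℕ)) : ℝ) = (a : ℝ) - (i : ℝ) * (k : ℝ) := by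
      push_cast [Nat.cast_sub hik]; ring
    have h2 := cast_choose_prod (a - i * k) (t - 1)
    have hfac : (Nat.factorial (t - 1) : ℝ) ≠ 0 := Nat.cast_ne_zero.mpr (Nat.factorial_ne_zero _)
    have h3 : ((a - i * k).choose (t - 1) : ℝ) =
        (∏ j ∈ Finset.range (t - 1), (((a - i * k : ℕ) : ℝ) - (j : ℝ))) *
          (Nat.factorial (t - 1) : ℝ)⁻¹ := by
      field_simp at h2 ⊢
      linarith [h2]
    rw [h3, hp]
    simp only [Polynomial.eval_mul, Polynomial.eval_prod, Polynomial.eval_sub,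
      Polynomial.eval_C, Polynomial.eval_mul, Polynomial.eval_X]
    congr 1
    apply Finset.prod_congr rfl; intro j _
    rw [hcast]; ring
  rw [Finset.sum_congr rfl (fun i hi => by rw [hev i hi])]
  exact alt_sum_poly t p hdeg

private noncomputable def F1 (n : ℕ) (lam : ℝ) (j : ℕ) : ℝ :=
  (Nat.choose (n - 1) (j - 1) : ℝ) * lam ^ j / (Nat.factorial j : ℝ)

private noncomputable def G (n k : ℕ) (lam : ℝ) (i j : ℕ) : ℝ :=
  (Nat.choose (n - i * k - 1) (j + i - 1) : ℝ) * lam ^ j / (Nat.factorial j : ℝ)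

private noncomputable def Cc (lam : ℝ) (i : ℕ) : ℝ :=
  (-1 : ℝ) ^ (i - 1) * lam ^ i / (Nat.factorial i : ℝ)

private lemma alg_aux (i : ℕ) (X Y Z C1 C2 f1 f2 ft : ℝ) (h1 : f1 ≠ 0) (h2 : f2 ≠ 0)
    (h3 : ft ≠ 0) (hz : X * Y = Z) (hf : C2 * f1 * f2 = ft) :
    (-1 : ℝ) ^ i * X / f1 * (C1 * Y / f2) = -(Z / ft) * ((-1 : ℝ) ^ (i + 1) * C2 * C1) := by
  field_simp
  linear_combination ((-1 : ℝ) ^ i * C1 * ft) * hz - ((-1 : ℝ) ^ i * C1 * Z) * hf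

private lemma perT (k n r m : ℕ) (hm1 : 1 ≤ m) (hn : n = r * k + m) (lam : ℝ)
    (t : ℕ) (ht : t ∈ Icc 1 r) :
    F1 n lam t = ∑ i ∈ Icc 1 t, Cc lam i * G n k lam i (t - i) := by
  obtain ⟨ht1, ht2⟩ := Finset.mem_Icc.mp ht
  have htk : t * k ≤ n - 1 := by
    have h12 := Nat.mul_le_mul_right k ht2
    omega
  have hkey := key_alt t (n - 1) k ht1 htk
  rw [Finset.sum_range_succ'] at hkey
  have e5 : Finset.Icc 1 t = Finset.Ico 1 (t + 1) := by rw [Finset.Ico_add_one_right_eq_Icc]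
  rw [e5, Finset.sum_Ico_eq_sum_range]
  have e6 : t + 1 - 1 = t := by omega
  rw [e6]
  have eterm : ∀ i ∈ range t, Cc lam (1 + i) * G n k lam (1 + i) (t - (1 + i))
      = -(lam ^ t / (Nat.factorial t : ℝ)) *
          ((-1 : ℝ) ^ (i + 1) * (t.choose (i + 1) : ℝ) *
            (((n - 1) - (i + 1) * k).choose (t - 1) : ℝ)) := by
    intro i hi
    have hit : i + 1 ≤ t := Finset.mem_range.mp hi
    have hfac := Nat.choose_mul_factorial_mul_factorial hit
    have hfacR : (t.choose (i + 1) : ℝ) * ((i + 1).factorial : ℝ) *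
        ((t - (i + 1)).factorial : ℝ) = (t.factorial : ℝ) := by
      exact_mod_cast congrArg (fun z : ℕ => (z : ℝ)) hfac
    have hF1 : ((1 : ℕ) + i).factorial = (i + 1).factorial := by rw [Nat.add_comm]
    have he1 : (1 : ℕ) + i - 1 = i := by omega
    have he2 : t - (1 + i) + (1 + i) - 1 = t - 1 := by omega
    have he3 : n - (1 + i) * k - 1 = (n - 1) - (i + 1) * k := by
      have h13 : (1 + i) * k = (i + 1) * k := by ring
      omega
    have he4 : lam ^ (1 + i) * lam ^ (t - (1 + i)) = lam ^ t := by
      rw [← pow_add]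
      congr 1
      omega
    have he5 : t - (i + 1) = t - (1 + i) := by omega
    rw [he5] at hfacR
    rw [Cc, G, he1, he2, he3, hF1]
    exact alg_aux i _ _ _ _ _ _ _ _
      (Nat.cast_ne_zero.mpr (Nat.factorial_ne_zero _))
      (Nat.cast_ne_zero.mpr (Nat.factorial_ne_zero _))
      (Nat.cast_ne_zero.mpr (Nat.factorial_ne_zero _)) he4 hfacR
  rw [Finset.sum_congr rfl eterm, ← Finset.mul_sum]
  have hsum : ∑ i ∈ range t, ((-1 : ℝ) ^ (i + 1) * (t.choose (i + 1) : ℝ) *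
        (((n - 1) - (i + 1) * k).choose (t - 1) : ℝ))
      = -(((n - 1).choose (t - 1) : ℝ)) := by
    have h0 : (-1 : ℝ) ^ 0 * (t.choose 0 : ℝ) * (((n - 1) - 0 * k).choose (t - 1) : ℝ)
        = ((n - 1).choose (t - 1) : ℝ) := by norm_num
    rw [h0] at hkey
    linarith
  rw [hsum, F1]
  ring

private lemma reindex (r : ℕ) (h : ℕ → ℕ → ℝ) :
    ∑ t ∈ Icc 1 r, ∑ i ∈ Icc 1 t, h i (t - i)
      = ∑ i ∈ Icc 1 r, ∑ j ∈ range (r + 1 - i), h i j := by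
  rw [Finset.sum_sigma', Finset.sum_sigma']
  refine Finset.sum_nbij' (fun x => ⟨x.2, x.1 - x.2⟩) (fun y => ⟨y.1 + y.2, y.1⟩)
    ?_ ?_ ?_ ?_ ?_
  · rintro ⟨t, i⟩ hx
    simp only [Finset.mem_sigma, Finset.mem_Icc, Finset.mem_range] at hx ⊢
    omega
  · rintro ⟨i, j⟩ hy
    simp only [Finset.mem_sigma, Finset.mem_Icc, Finset.mem_range] at hy ⊢
    omega
  · rintro ⟨t, i⟩ hx
    simp only [Finset.mem_sigma, Finset.mem_Icc] at hx
    have : i + (t - i) = t := by omega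
    simp only [Sigma.mk.inj_iff, this, heq_eq_eq, and_true]
  · rintro ⟨i, j⟩ hy
    simp only [Finset.mem_sigma, Finset.mem_Icc, Finset.mem_range] at hy
    have : i + j - i = j := by omega
    simp only [Sigma.mk.inj_iff, this, heq_eq_eq, and_true]
  · rintro ⟨t, i⟩ hx
    rfl

theorem two_combinatorial_sums_agree (k n r m ℓ m' : ℕ) (hk : 2 ≤ k) (hr : 1 ≤ r)
    (hm1 : 1 ≤ m) (hmk : m ≤ k) (hn : n = r * k + m)
    (hm'k : m' ≤ k) (hn' : n = ℓ * (k + 1) + m') (lam : ℝ) :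
    (∑ j ∈ Finset.Icc 1 n, (Nat.choose (n - 1) (j - 1) : ℝ) * lam ^ j / (Nat.factorial j : ℝ))
      - (∑ i ∈ Finset.Icc 1 ℓ, (-1 : ℝ) ^ (i - 1) * lam ^ i / (Nat.factorial i : ℝ) *
          ∑ j ∈ Finset.range (n - i * (k + 1) + 1),
            (Nat.choose (n - i * (k + 1) + i - 1) (j + i - 1) : ℝ) * lam ^ j /
              (Nat.factorial j : ℝ))
    =
    (∑ j ∈ Finset.Icc (r + 1) n,
        (Nat.choose (n - 1) (j - 1) : ℝ) * lam ^ j / (Nat.factorial j : ℝ))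
      - (∑ i ∈ Finset.Icc 1 r, (-1 : ℝ) ^ (i - 1) * lam ^ i / (Nat.factorial i : ℝ) *
          ∑ j ∈ Finset.Icc (r + 1 - i) (n - i * k - 1),
            (Nat.choose (n - i * k - 1) (j + i - 1) : ℝ) * lam ^ j /
              (Nat.factorial j : ℝ)) := by
  have hkpos : 1 ≤ k := by omega
  have hrn : r < n := by
    have h := Nat.mul_le_mul_left r hkpos
    rw [Nat.mul_one] at h
    omega
  have hlr : ℓ ≤ r := by
    by_contra hcon
    push_neg at hcon
    have h1 : (r + 1) * (k + 1) ≤ ℓ * (k + 1) := Nat.mul_le_mul_right _ (by omega)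
    have h2 : (r + 1) * (k + 1) = r * k + r + k + 1 := by ring
    omega
  have hik : ∀ i, i ≤ r → i * k + m ≤ n := by
    intro i hi
    have h := Nat.mul_le_mul_right k hi
    omega
  -- Step 1 : split the first sum
  have step1 : ∑ j ∈ Icc 1 n, F1 n lam j
      = (∑ j ∈ Icc 1 r, F1 n lam j) + ∑ j ∈ Icc (r + 1) n, F1 n lam j := by
    have e1 : Finset.Icc 1 n = Finset.Ioc 0 n := by rw [← Finset.Icc_add_one_left_eq_Ioc, zero_add]
    have e2 : Finset.Icc 1 r = Finset.Ioc 0 r := by rw [← Finset.Icc_add_one_left_eq_Ioc, zero_add]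
    have e3 : Finset.Icc (r + 1) n = Finset.Ioc r n := by rw [← Finset.Icc_add_one_left_eq_Ioc]
    rw [e1, e2, e3]
    exact (Finset.sum_Ioc_consecutive _ (Nat.zero_le r) (le_of_lt hrn)).symm
  -- Step 2 : rewrite the LHS double sum
  have step2 : (∑ i ∈ Finset.Icc 1 ℓ, Cc lam i *
          ∑ j ∈ Finset.range (n - i * (k + 1) + 1),
            (Nat.choose (n - i * (k + 1) + i - 1) (j + i - 1) : ℝ) * lam ^ j /
              (Nat.factorial j : ℝ))
      = ∑ i ∈ Icc 1 r, Cc lam i * ∑ j ∈ range (n - i * k), G n k lam i j := by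
    have h2a : ∀ i ∈ Icc 1 ℓ, Cc lam i *
          (∑ j ∈ Finset.range (n - i * (k + 1) + 1),
            (Nat.choose (n - i * (k + 1) + i - 1) (j + i - 1) : ℝ) * lam ^ j /
              (Nat.factorial j : ℝ))
        = Cc lam i * ∑ j ∈ range (n - i * k), G n k lam i j := by
      intro i hi
      obtain ⟨hi1, hi2⟩ := Finset.mem_Icc.mp hi
      have hik1 : i * (k + 1) ≤ n := by
        have h3 : i * (k + 1) ≤ ℓ * (k + 1) := Nat.mul_le_mul_right _ hi2
        omega
      have hiki : i * (k + 1) = i * k + i := by ring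
      congr 1
      have hG : ∀ j, (Nat.choose (n - i * (k + 1) + i - 1) (j + i - 1) : ℝ) * lam ^ j /
          (Nat.factorial j : ℝ) = G n k lam i j := by
        intro j
        have htop : n - i * (k + 1) + i - 1 = n - i * k - 1 := by omega
        rw [G, htop]
      rw [Finset.sum_congr rfl fun j _ => hG j]
      apply Finset.sum_subset
      · apply Finset.range_subset_range.mpr; omega
      · intro j hj hj2
        have hj3 : n - i * (k + 1) + 1 ≤ j := by
          by_contra hcc
          exact hj2 (Finset.mem_range.mpr (by omega))
        have hcz : Nat.choose (n - i * k - 1) (j + i - 1) = 0 :=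
          Nat.choose_eq_zero_of_lt (by omega)
        simp [G, hcz]
    rw [Finset.sum_congr rfl h2a]
    apply Finset.sum_subset (Finset.Icc_subset_Icc_right hlr)
    intro i hi hnotin
    obtain ⟨hi1, hi2⟩ := Finset.mem_Icc.mp hi
    have hl : ℓ < i := by
      by_contra hcc
      exact hnotin (Finset.mem_Icc.mpr (by omega))
    have h4 : (ℓ + 1) * (k + 1) ≤ i * (k + 1) := Nat.mul_le_mul_right _ (by omega)
    have h5 : (ℓ + 1) * (k + 1) = ℓ * (k + 1) + k + 1 := by ring
    have h6 : i * (k + 1) = i * k + i := by ring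
    have h7 := hik i hi2
    have hc0 : ∀ j ∈ range (n - i * k), G n k lam i j = 0 := by
      intro j hj
      have hcz : Nat.choose (n - i * k - 1) (j + i - 1) = 0 :=
        Nat.choose_eq_zero_of_lt (by omega)
      simp [G, hcz]
    rw [Finset.sum_eq_zero hc0, mul_zero]
  -- Step 4 : split inner sums
  have step4 : ∀ i ∈ Icc 1 r, (∑ j ∈ range (n - i * k), G n k lam i j)
      = (∑ j ∈ range (r + 1 - i), G n k lam i j)
        + ∑ j ∈ Icc (r + 1 - i) (n - i * k - 1), G n k lam i j := by
    intro i hi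
    obtain ⟨hi1, hi2⟩ := Finset.mem_Icc.mp hi
    have h7 := hik i hi2
    have h8 : i * k ≤ r * k := Nat.mul_le_mul_right k hi2
    have h9 : (r - i) * k + i * k = r * k := by
      rw [← Nat.add_mul, Nat.sub_add_cancel hi2]
    have h10 : r - i ≤ (r - i) * k := Nat.le_mul_of_pos_right _ (by omega)
    have h11 : r + 1 - i ≤ n - i * k := by omega
    have e4 : Ico (r + 1 - i) (n - i * k) = Icc (r + 1 - i) (n - i * k - 1) := by
      rw [← Finset.Ico_add_one_right_eq_Icc]
      congr 1
      omega
    rw [← e4, ← Finset.sum_range_add_sum_Ico _ h11]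
  -- Step 5
  have step5 : (∑ j ∈ Icc 1 r, F1 n lam j)
      = ∑ i ∈ Icc 1 r, Cc lam i * ∑ j ∈ range (r + 1 - i), G n k lam i j := by
    rw [Finset.sum_congr rfl (perT k n r m hm1 hn lam)]
    rw [reindex r (fun i j => Cc lam i * G n k lam i j)]
    apply Finset.sum_congr rfl
    intro i _
    rw [Finset.mul_sum]
  -- assemble
  show (∑ j ∈ Icc 1 n, F1 n lam j)
      - (∑ i ∈ Finset.Icc 1 ℓ, Cc lam i *
          ∑ j ∈ Finset.range (n - i * (k + 1) + 1),
            (Nat.choose (n - i * (k + 1) + i - 1) (j + i - 1) : ℝ) * lam ^ j /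
              (Nat.factorial j : ℝ))
    = (∑ j ∈ Icc (r + 1) n, F1 n lam j)
      - ∑ i ∈ Icc 1 r, Cc lam i * ∑ j ∈ Icc (r + 1 - i) (n - i * k - 1), G n k lam i j
  rw [step1, step2]
  have step4' : (∑ i ∈ Icc 1 r, Cc lam i * ∑ j ∈ range (n - i * k), G n k lam i j)
      = (∑ i ∈ Icc 1 r, Cc lam i * ∑ j ∈ range (r + 1 - i), G n k lam i j)
        + ∑ i ∈ Icc 1 r, Cc lam i * ∑ j ∈ Icc (r + 1 - i) (n - i * k - 1), G n k lam i j := by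
    rw [← Finset.sum_add_distrib]
    apply Finset.sum_congr rfl
    intro i hi
    rw [step4 i hi, mul_add]
  rw [step4', ← step5]
  ring
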